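/- Let b = λ + iη with λ, η ∈ ℝ and λ > 0. Define the entire function 𝒩(b;w) = e^{−iw} · Σ_{j=0}^{∞} (b)_j (2iw)^j / ((2λ)_j · j!) (the confluent hypergeometric combination e^{−iw}·₁F₁(b; 2λ; 2iw)), and let 𝒫̂ₙ(b;x) = (2ⁿ(λ)ₙ/(2λ)ₙ)·𝒫ₙ(b;x) be the monic complementary Romanovski–Routh polynomials. Then for every x ∈ ℝ and every w ∈ ℂ, e^{xw} · 𝒩(b;w) = Σ_{n=0}^{∞} 𝒫̂ₙ(b;x) · wⁿ/n!, the series converging absolutely for all w ∈ ℂ. -/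

import Mathlib

open Complex

/-- Pochhammer symbol `(a)ₖ` over ℂ. -/
noncomputable def poch (a : ℂ) (k : ℕ) : ℂ := Polynomial.eval a (ascPochhammer ℂ k)

/-- The entire function `𝒩(b;w) = e^{−iw}·₁F₁(b; 2λ; 2iw)`, with `b = λ + iη`. -/
noncomputable def NFun (lam eta : ℝ) (w : ℂ) : ℂ :=
  Complex.exp (-I * w) *
    ∑' j : ℕ, poch ((lam : ℂ) + (eta : ℂ) * I) j * (2 * I * w) ^ j /
      (poch (2 * lam) j * (Nat.factorial j : ℂ))

/-- Complementary Romanovski–Routh polynomials `𝒫ₙ(b;x)` with `b = λ + iη`,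
defined by the three-term recurrence, evaluated at complex `x`. -/
noncomputable def crr (lam eta : ℝ) : ℕ → ℂ → ℂ
  | 0, _ => 1
  | 1, x => x - ((eta / lam : ℝ) : ℂ)
  | n + 2, x =>
      (x - ((eta / (lam + n + 1) : ℝ) : ℂ)) * crr lam eta (n + 1) x -
        (((n + 1) * (2 * lam + n) / (4 * (lam + n) * (lam + n + 1)) : ℝ) : ℂ) *
          (x ^ 2 + 1) * crr lam eta n x

/-- Monic complementary Romanovski–Routh polynomials
`𝒫̂ₙ(b;x) = (2ⁿ(λ)ₙ/(2λ)ₙ)·𝒫ₙ(b;x)`. -/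
noncomputable def crrMonic (lam eta : ℝ) (n : ℕ) (x : ℂ) : ℂ :=
  ((2 : ℂ) ^ n * poch (lam : ℂ) n / poch (2 * lam) n) * crr lam eta n x

/-! ### Auxiliary lemmas -/

lemma poch_zero (a : ℂ) : poch a 0 = 1 := by simp [poch]

lemma poch_succ (a : ℂ) (k : ℕ) : poch a (k+1) = poch a k * (a + k) := by
  simp [poch, ascPochhammer_succ_right]

lemma poch_ofReal (r : ℝ) (k : ℕ) :
    poch (r:ℂ) k = ((Polynomial.eval r (ascPochhammer ℝ k) : ℝ) : ℂ) := by
  induction k with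
  | zero => simp [poch]
  | succ n ih =>
      rw [poch_succ, ih, ascPochhammer_succ_right]
      push_cast [Polynomial.eval_mul, Polynomial.eval_add, Polynomial.eval_X,
        Polynomial.eval_natCast]
      ring

lemma poch_pos_ne (r : ℝ) (hr : 0 < r) (k : ℕ) : poch (r:ℂ) k ≠ 0 := by
  rw [poch_ofReal]
  exact_mod_cast (ascPochhammer_pos k r hr).ne'

lemma real_cast_ne {r : ℝ} (h : 0 < r) : ((r:ℝ):ℂ) ≠ 0 := by
  exact_mod_cast h.ne'

/-- the ratio `(b)ⱼ/(2λ)ⱼ`. -/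
noncomputable def cbeta (lam eta : ℝ) (j : ℕ) : ℂ :=
  poch ((lam : ℂ) + (eta : ℂ) * I) j / poch (2 * lam) j

lemma poch2lam_ne (lam : ℝ) (hlam : 0 < lam) (k : ℕ) : poch (2 * (lam:ℂ)) k ≠ 0 := by
  have h : (2 * (lam:ℂ)) = ((2 * lam : ℝ) : ℂ) := by push_cast; ring
  rw [h]
  exact poch_pos_ne _ (by linarith) k

lemma cbeta_zero (lam eta : ℝ) : cbeta lam eta 0 = 1 := by
  simp [cbeta, poch_zero]

lemma cbeta_succ (lam eta : ℝ) (hlam : 0 < lam) (k : ℕ) :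
    cbeta lam eta (k+1) * (2 * (lam:ℂ) + k)
      = cbeta lam eta k * (((lam:ℂ) + (eta:ℂ) * I) + k) := by
  have h2 : poch (2 * (lam:ℂ)) k ≠ 0 := poch2lam_ne lam hlam k
  have h3 : (2 * (lam:ℂ) + k) ≠ 0 := by
    have h : (2 * (lam:ℂ) + k) = ((2 * lam + k : ℝ) : ℂ) := by push_cast; ring
    rw [h]
    exact real_cast_ne (by positivity)
  have hcast : poch (2 * ↑lam) (k+1) = poch (2 * (lam:ℂ)) k * (2 * (lam:ℂ) + k) :=
    poch_succ _ k
  rw [cbeta, cbeta, poch_succ, hcast]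
  rw [div_mul_eq_mul_div, mul_div_mul_right _ _ h3]
  ring

lemma coef_id (lam eta : ℝ) (hlam : 0 < lam) (n k : ℕ) :
    (2*(lam:ℂ)+n+1) * ((n+2).choose (k+1) : ℂ) * cbeta lam eta (k+1)
      = 2*((lam:ℂ)+n+1) * ((n+1).choose (k+1) : ℂ) * cbeta lam eta (k+1)
        + (((lam:ℂ) + (eta:ℂ)*I)+n+1) * ((n+1).choose k : ℂ) * cbeta lam eta k
        - (n+1) * (n.choose (k+1) : ℂ) * cbeta lam eta (k+1)
        - (n+1) * (n.choose k : ℂ) * cbeta lam eta k := by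
  have R1 : ((n+1).choose (k+1) : ℂ) = (n.choose k : ℂ) + (n.choose (k+1) : ℂ) := by
    exact_mod_cast congrArg (Nat.cast (R := ℂ)) (Nat.choose_succ_succ' n k)
  have R2 : ((n+2).choose (k+1) : ℂ) = ((n+1).choose k : ℂ) + ((n+1).choose (k+1) : ℂ) := by
    exact_mod_cast congrArg (Nat.cast (R := ℂ)) (Nat.choose_succ_succ' (n+1) k)
  have R3 : ((k:ℂ)+1) * ((n+1).choose (k+1) : ℂ) = ((n:ℂ)+1) * (n.choose k : ℂ) := by
    have h := congrArg (Nat.cast (R := ℂ)) (Nat.add_one_mul_choose_eq n k)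
    push_cast at h
    linear_combination -h
  have R4 : ((k:ℂ)+1) * ((n+2).choose (k+1) : ℂ) = ((n:ℂ)+2) * ((n+1).choose k : ℂ) := by
    have h := congrArg (Nat.cast (R := ℂ)) (Nat.add_one_mul_choose_eq (n+1) k)
    push_cast at h
    linear_combination -h
  have R5 := cbeta_succ lam eta hlam k
  set B1 := cbeta lam eta (k+1)
  set B0 := cbeta lam eta k
  linear_combination (-((n:ℂ)+1)*B1) * R1 + (((n:ℂ)+2)*B1 + (((lam:ℂ)+(eta:ℂ)*I)-1)*B0) * R2
    + (B1 - B0) * R3 - (B1 - B0) * R4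
    + (((n+2).choose (k+1) : ℂ) - ((n+1).choose (k+1) : ℂ)) * R5

/-- The claimed closed form of the monic polynomials. -/
noncomputable def AA (lam eta x : ℝ) (n : ℕ) : ℂ :=
  ∑ j ∈ Finset.range (n+1),
    (n.choose j : ℂ) * cbeta lam eta j * (2*I)^j * ((x:ℂ) - I)^(n-j)

def shiftF (f : ℕ → ℂ) : ℕ → ℂ
  | 0 => 0
  | (k+1) => f k

@[simp] lemma shiftF_zero (f : ℕ → ℂ) : shiftF f 0 = 0 := rfl
@[simp] lemma shiftF_succ (f : ℕ → ℂ) (k : ℕ) : shiftF f (k+1) = f k := rfl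

lemma AA_rec (lam eta x : ℝ) (hlam : 0 < lam) (n : ℕ) :
    (2*(lam:ℂ)+n+1) * AA lam eta x (n+2)
      = (2*((lam:ℂ)+n+1) * ((x:ℂ)-I) + 2*I*((((lam:ℂ)+(eta:ℂ)*I))+n+1)) * AA lam eta x (n+1)
        - ((n:ℂ)+1) * ((x:ℂ)-I) * (((x:ℂ)-I)+2*I) * AA lam eta x n := by
  set b : ℂ := (lam:ℂ) + (eta:ℂ)*I with hb
  set y : ℂ := (x:ℂ) - I with hy
  have e1 : y * AA lam eta x (n+1)
      = ∑ j ∈ Finset.range (n+3),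
          ((n+1).choose j : ℂ) * cbeta lam eta j * (2*I)^j * y^(n+2-j) := by
    rw [Finset.sum_range_succ, Nat.choose_eq_zero_of_lt (by omega)]
    rw [AA, Finset.mul_sum]
    simp only [Nat.cast_zero, zero_mul, add_zero]
    refine Finset.sum_congr rfl fun j hj => ?_
    rw [Finset.mem_range] at hj
    have h2 : n+2-j = (n+1-j)+1 := by omega
    rw [h2, pow_succ]
    ring
  have e2 : (2*I) * AA lam eta x (n+1)
      = ∑ j ∈ Finset.range (n+3), shiftF (fun k =>
          ((n+1).choose k : ℂ) * cbeta lam eta k * (2*I)^(k+1) * y^(n+2-(k+1))) j := by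
    rw [Finset.sum_range_succ']
    simp only [shiftF_zero, shiftF_succ, add_zero]
    rw [AA, Finset.mul_sum]
    refine Finset.sum_congr rfl fun j hj => ?_
    have h2 : n+2-(j+1) = n+1-j := by omega
    rw [h2, pow_succ]
    ring
  have e3 : y^2 * AA lam eta x n
      = ∑ j ∈ Finset.range (n+3), (n.choose j : ℂ) * cbeta lam eta j * (2*I)^j * y^(n+2-j) := by
    rw [Finset.sum_range_succ, Nat.choose_eq_zero_of_lt (by omega),
      Finset.sum_range_succ, Nat.choose_eq_zero_of_lt (by omega)]
    rw [AA, Finset.mul_sum]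
    simp only [Nat.cast_zero, zero_mul, add_zero]
    refine Finset.sum_congr rfl fun j hj => ?_
    rw [Finset.mem_range] at hj
    have h2 : n+2-j = (n-j)+2 := by omega
    rw [h2]
    ring
  have e4 : (2*I) * y * AA lam eta x n
      = ∑ j ∈ Finset.range (n+3), shiftF (fun k =>
          (n.choose k : ℂ) * cbeta lam eta k * (2*I)^(k+1) * y^(n+2-(k+1))) j := by
    rw [Finset.sum_range_succ']
    simp only [shiftF_zero, shiftF_succ, add_zero]
    rw [Finset.sum_range_succ, Nat.choose_eq_zero_of_lt (by omega)]
    rw [AA, Finset.mul_sum]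
    simp only [Nat.cast_zero, zero_mul, add_zero]
    refine Finset.sum_congr rfl fun j hj => ?_
    rw [Finset.mem_range] at hj
    have h2 : n+2-(j+1) = (n-j)+1 := by omega
    rw [h2, pow_succ]
    ring
  have hR : (2*((lam:ℂ)+n+1) * y + 2*I*(b+n+1)) * AA lam eta x (n+1)
        - ((n:ℂ)+1) * y * (y+2*I) * AA lam eta x n
      = 2*((lam:ℂ)+n+1) * (y * AA lam eta x (n+1)) + (b+n+1) * ((2*I) * AA lam eta x (n+1))
        - ((n:ℂ)+1) * (y^2 * AA lam eta x n) - ((n:ℂ)+1) * ((2*I) * y * AA lam eta x n) := by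
    ring
  have e0 : (2*(lam:ℂ)+n+1) * AA lam eta x (n+2)
      = ∑ j ∈ Finset.range (n+3),
          (2*(lam:ℂ)+n+1) * (((n+2).choose j : ℂ) * cbeta lam eta j * (2*I)^j * y^(n+2-j)) := by
    rw [AA, Finset.mul_sum]
  rw [hR, e1, e2, e3, e4, e0, Finset.mul_sum, Finset.mul_sum, Finset.mul_sum, Finset.mul_sum,
    ← Finset.sum_add_distrib, ← Finset.sum_sub_distrib, ← Finset.sum_sub_distrib]
  refine Finset.sum_congr rfl fun j hj => ?_
  match j with
  | 0 =>
      simp only [shiftF_zero, mul_zero, add_zero, sub_zero, Nat.choose_zero_right, Nat.cast_one,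
        pow_zero, Nat.sub_zero]
      ring
  | (k+1) =>
      simp only [shiftF_succ]
      linear_combination ((2*I)^(k+1) * y^(n+2-(k+1))) * coef_id lam eta hlam n k

lemma AA_zero (lam eta x : ℝ) : AA lam eta x 0 = 1 := by
  simp [AA, cbeta_zero]

lemma crr_two_step (lam eta : ℝ) (n : ℕ) (x : ℂ) :
    crr lam eta (n+2) x
      = (x - ((eta / (lam + n + 1) : ℝ) : ℂ)) * crr lam eta (n + 1) x -
        (((n + 1) * (2 * lam + n) / (4 * (lam + n) * (lam + n + 1)) : ℝ) : ℂ) *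
          (x ^ 2 + 1) * crr lam eta n x := rfl

/-- division-free key identity -/
lemma star_eq (lam eta x : ℝ) (hlam : 0 < lam) : ∀ n : ℕ,
    poch (2 * (lam:ℂ)) n * AA lam eta x n
      = 2^n * poch ((lam:ℂ)) n * crr lam eta n (x:ℂ) := by
  have base0 : poch (2 * (lam:ℂ)) 0 * AA lam eta x 0
      = 2^0 * poch ((lam:ℂ)) 0 * crr lam eta 0 (x:ℂ) := by
    rw [poch_zero, poch_zero, AA_zero]
    show (1:ℂ) * 1 = 2^0 * 1 * 1
    norm_num
  have base1 : poch (2 * (lam:ℂ)) 1 * AA lam eta x 1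
      = 2^1 * poch ((lam:ℂ)) 1 * crr lam eta 1 (x:ℂ) := by
    have hb1 : cbeta lam eta 1 * (2 * (lam:ℂ)) = (lam:ℂ) + (eta:ℂ)*I := by
      have h := cbeta_succ lam eta hlam 0
      push_cast at h
      simpa [cbeta_zero] using h
    have hlamC : ((lam:ℝ):ℂ) ≠ 0 := real_cast_ne hlam
    have hc0 : (eta:ℂ)/(lam:ℂ) * (lam:ℂ) = (eta:ℂ) := div_mul_cancel₀ _ hlamC
    rw [poch_succ, poch_zero, poch_succ, poch_zero]
    rw [show crr lam eta 1 (x:ℂ) = (x:ℂ) - ((eta/lam : ℝ):ℂ) from rfl]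
    rw [AA, Finset.sum_range_succ, Finset.sum_range_succ, Finset.sum_range_zero]
    simp only [Nat.choose_self, Nat.choose_zero_right, Nat.cast_one, pow_zero, pow_one,
      Nat.sub_self, Nat.sub_zero, cbeta_zero, zero_add, one_mul, mul_one]
    push_cast
    linear_combination (2*I) * hb1 + 2 * hc0 + (2*(eta:ℂ)) * Complex.I_sq
  have step : ∀ n : ℕ,
      poch (2 * (lam:ℂ)) n * AA lam eta x n = 2^n * poch ((lam:ℂ)) n * crr lam eta n (x:ℂ) →
      poch (2 * (lam:ℂ)) (n+1) * AA lam eta x (n+1)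
        = 2^(n+1) * poch ((lam:ℂ)) (n+1) * crr lam eta (n+1) (x:ℂ) →
      poch (2 * (lam:ℂ)) (n+2) * AA lam eta x (n+2)
        = 2^(n+2) * poch ((lam:ℂ)) (n+2) * crr lam eta (n+2) (x:ℂ) := by
    intro n ih1 ih2
    have hn0 : (0:ℝ) ≤ (n:ℝ) := Nat.cast_nonneg n
    have ih2' : poch (2 * (lam:ℂ)) n * (2*(lam:ℂ)+n) * AA lam eta x (n+1)
        = 2 * 2^n * (poch ((lam:ℂ)) n * ((lam:ℂ)+n)) * crr lam eta (n+1) (x:ℂ) := by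
      rw [poch_succ, poch_succ, pow_succ] at ih2
      linear_combination ih2
    have hrec := AA_rec lam eta x hlam n
    have hcR : (eta/(lam+(n:ℝ)+1)) * (lam+(n:ℝ)+1) = eta :=
      div_mul_cancel₀ eta (by linarith : lam+(n:ℝ)+1 > 0).ne'
    have hc : (eta:ℂ)/((lam:ℂ)+(n:ℂ)+1) * ((lam:ℂ)+(n:ℂ)+1) = (eta:ℂ) := by
      have h := congrArg Complex.ofReal hcR
      push_cast at h
      linear_combination h
    have hdR : (((n:ℝ)+1)*(2*lam+(n:ℝ))/(4*(lam+(n:ℝ))*(lam+(n:ℝ)+1)))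
          * (4*(lam+(n:ℝ))*(lam+(n:ℝ)+1)) = ((n:ℝ)+1)*(2*lam+(n:ℝ)) := by
      apply div_mul_cancel₀
      have h1 : (0:ℝ) < lam+(n:ℝ) := by linarith
      have h2 : (0:ℝ) < lam+(n:ℝ)+1 := by linarith
      positivity
    have hd : (((n:ℂ)+1)*(2*(lam:ℂ)+(n:ℂ))/(4*((lam:ℂ)+(n:ℂ))*((lam:ℂ)+(n:ℂ)+1)))
          * (4*((lam:ℂ)+(n:ℂ))*((lam:ℂ)+(n:ℂ)+1)) = ((n:ℂ)+1)*(2*(lam:ℂ)+(n:ℂ)) := by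
      have h := congrArg Complex.ofReal hdR
      push_cast at h
      linear_combination h
    have hP2 : poch ((lam:ℂ)) (n+2) = poch ((lam:ℂ)) n * (((lam:ℂ)+n) * ((lam:ℂ)+n+1)) := by
      rw [show n+2 = (n+1)+1 from rfl, poch_succ, poch_succ]; push_cast; ring
    have hQ2 : poch (2*(lam:ℂ)) (n+2)
        = poch (2*(lam:ℂ)) n * ((2*(lam:ℂ)+n) * (2*(lam:ℂ)+n+1)) := by
      rw [show n+2 = (n+1)+1 from rfl, poch_succ, poch_succ]; push_cast; ring
    rw [hQ2, hP2, crr_two_step]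
    push_cast
    linear_combination (poch (2*(lam:ℂ)) n * (2*(lam:ℂ)+(n:ℂ))) * hrec
      + (2*((lam:ℂ)+(n:ℂ)+1)*(x:ℂ) - 2*(eta:ℂ)) * ih2'
      - ((n:ℂ)+1)*((x:ℂ)^2+1)*(2*(lam:ℂ)+(n:ℂ)) * ih1
      + 4*(2:ℂ)^n*(poch ((lam:ℂ)) n)*((lam:ℂ)+(n:ℂ)) * (crr lam eta (n+1) (x:ℂ)) * hc
      + (2:ℂ)^n*(poch ((lam:ℂ)) n) * (crr lam eta n (x:ℂ)) * ((x:ℂ)^2+1) * hd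
      + (poch (2*(lam:ℂ)) n * (2*(lam:ℂ)+(n:ℂ))
          * (2*(eta:ℂ)*AA lam eta x (n+1) + ((n:ℂ)+1)*AA lam eta x n)) * Complex.I_sq
  intro n
  induction n using Nat.twoStepInduction with
  | zero => exact base0
  | one => exact base1
  | more m ihm ihm1 => exact step m ihm ihm1

lemma crrMonic_eq_AA (lam eta x : ℝ) (hlam : 0 < lam) (n : ℕ) :
    crrMonic lam eta n (x:ℂ) = AA lam eta x n := by
  have hQ : poch (2 * (lam:ℂ)) n ≠ 0 := poch2lam_ne lam hlam n
  have h := star_eq lam eta x hlam n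
  rw [crrMonic, div_mul_eq_mul_div, div_eq_iff hQ]
  linear_combination -h

theorem stmt13 (lam eta : ℝ) (hlam : 0 < lam) (x : ℝ) (w : ℂ) :
    HasSum (fun n : ℕ => crrMonic lam eta n x * w ^ n / (Nat.factorial n : ℂ))
        (Complex.exp (x * w) * NFun lam eta w) ∧
      Summable (fun n : ℕ =>
        ‖crrMonic lam eta n x * w ^ n / (Nat.factorial n : ℂ)‖) := by
  set y : ℂ := (x:ℂ) - I with hy
  set f : ℕ → ℂ := fun j => cbeta lam eta j * (2*I)^j * w^j / (Nat.factorial j : ℂ) with hfdef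
  set g : ℕ → ℂ := fun k => y^k * w^k / (Nat.factorial k : ℂ) with hgdef
  have hgs : Summable fun k => ‖g k‖ := by
    refine (NormedSpace.norm_expSeries_div_summable (y*w)).congr fun k => ?_
    rw [hgdef]
    simp [mul_pow]
  set K : ℝ := (‖(lam:ℂ) + (eta:ℂ)*I‖ + 2*lam)/(2*lam) with hK
  have habs0 : (0:ℝ) ≤ ‖(lam:ℂ) + (eta:ℂ)*I‖ := norm_nonneg _
  have hK1 : 1 ≤ K := by
    rw [hK, le_div_iff₀ (by linarith)]
    linarith
  have hcb : ∀ j, ‖cbeta lam eta j‖ ≤ K^j := by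
    intro j
    induction j with
    | zero => simp [cbeta_zero]
    | succ k ih =>
        have hk0 : (0:ℝ) ≤ (k:ℝ) := Nat.cast_nonneg k
        have h3 : (0:ℝ) < 2*lam + k := by linarith
        have habs : ‖cbeta lam eta (k+1)‖ * (2*lam + k)
            = ‖cbeta lam eta k‖ * ‖((lam:ℂ) + (eta:ℂ)*I) + k‖ := by
          have h := congrArg norm (cbeta_succ lam eta hlam k)
          rw [norm_mul, norm_mul] at h
          have e : ‖2*(lam:ℂ)+k‖ = 2*lam + k := by
            have e2 : (2*(lam:ℂ)+k) = ((2*lam+k : ℝ):ℂ) := by push_cast; ring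
            rw [e2, Complex.norm_real, Real.norm_eq_abs, abs_of_pos h3]
          rw [e] at h
          exact h
        have hbk : ‖((lam:ℂ) + (eta:ℂ)*I) + k‖ ≤ K * (2*lam+k) := by
          calc ‖((lam:ℂ) + (eta:ℂ)*I) + k‖
              ≤ ‖(lam:ℂ) + (eta:ℂ)*I‖ + ‖((k:ℕ) : ℂ)‖ :=
                norm_add_le _ _
            _ = ‖(lam:ℂ) + (eta:ℂ)*I‖ + k := by rw [Complex.norm_natCast]
            _ ≤ K * (2*lam+k) := by
                rw [hK, div_mul_eq_mul_div, le_div_iff₀ (by linarith)]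
                nlinarith
        have hcbnn : (0:ℝ) ≤ ‖cbeta lam eta k‖ := norm_nonneg _
        have hKk : (0:ℝ) ≤ K^k := pow_nonneg (by linarith) k
        calc ‖cbeta lam eta (k+1)‖
            = ‖cbeta lam eta k‖ * ‖((lam:ℂ) + (eta:ℂ)*I) + k‖
                / (2*lam+k) := by
              rw [eq_div_iff h3.ne']
              exact habs
          _ ≤ K^k * (K * (2*lam+k)) / (2*lam+k) := by
              gcongr
          _ = K^(k+1) := by
              rw [mul_div_assoc, mul_div_cancel_right₀ _ h3.ne', pow_succ]
  have hfb : ∀ j, ‖f j‖ ≤ (2*K*‖w‖)^j / (Nat.factorial j : ℝ) := by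
    intro j
    rw [hfdef]
    simp only [norm_div, norm_mul, norm_pow, Complex.norm_natCast,
      Complex.norm_I, Complex.norm_two, mul_one]
    have hfj : (0:ℝ) < (Nat.factorial j : ℝ) := by exact_mod_cast Nat.factorial_pos j
    have hnum : ‖cbeta lam eta j‖ * 2 ^ j * ‖w‖ ^ j
        ≤ (2*K*‖w‖)^j := by
      have e : (2*K*‖w‖)^j = K^j * 2^j * ‖w‖ ^ j := by
        rw [mul_pow, mul_pow]; ring
      rw [e]
      have h2 : (0:ℝ) ≤ 2^j * ‖w‖ ^ j := by positivity
      calc ‖cbeta lam eta j‖ * 2 ^ j * ‖w‖ ^ j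
          = ‖cbeta lam eta j‖ * (2^j * ‖w‖ ^ j) := by ring
        _ ≤ K^j * (2^j * ‖w‖ ^ j) := mul_le_mul_of_nonneg_right (hcb j) h2
        _ = K^j * 2^j * ‖w‖ ^ j := by ring
    rw [div_le_div_iff₀ hfj hfj]
    exact mul_le_mul_of_nonneg_right hnum hfj.le
  have hfs : Summable fun j => ‖f j‖ :=
    Summable.of_nonneg_of_le (fun _ => norm_nonneg _) hfb
      (Real.summable_pow_div_factorial _)
  have H := hasSum_sum_range_mul_of_summable_norm hfs hgs
  have hterm : ∀ n, ∑ k ∈ Finset.range (n+1), f k * g (n-k)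
      = crrMonic lam eta n (x:ℂ) * w^n / (Nat.factorial n : ℂ) := by
    intro n
    rw [crrMonic_eq_AA lam eta x hlam n, AA, Finset.sum_mul, Finset.sum_div]
    refine Finset.sum_congr rfl fun k hk => ?_
    rw [Finset.mem_range] at hk
    have hk' : k ≤ n := by omega
    have hw : w^k * w^(n-k) = w^n := by rw [← pow_add]; congr 1; omega
    have hfact : ((n.choose k : ℂ)) * (Nat.factorial k : ℂ) * (Nat.factorial (n-k) : ℂ)
        = (Nat.factorial n : ℂ) := by
      exact_mod_cast congrArg (Nat.cast (R := ℂ)) (Nat.choose_mul_factorial_mul_factorial hk')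
    have hk0 : (Nat.factorial k : ℂ) ≠ 0 := Nat.cast_ne_zero.2 (Nat.factorial_ne_zero k)
    have hnk0 : (Nat.factorial (n-k) : ℂ) ≠ 0 := Nat.cast_ne_zero.2 (Nat.factorial_ne_zero _)
    have hn0 : (Nat.factorial n : ℂ) ≠ 0 := Nat.cast_ne_zero.2 (Nat.factorial_ne_zero n)
    have hch : (n.choose k : ℂ) ≠ 0 := Nat.cast_ne_zero.2 (Nat.choose_pos hk').ne'
    rw [hfdef, hgdef]
    rw [← hw, ← hfact]
    field_simp
    ring
  have hexpg : ∑' k, g k = Complex.exp (y*w) := by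
    have h1 : ∑' k, g k = ∑' k, (y*w)^k / (Nat.factorial k : ℂ) :=
      tsum_congr fun k => by rw [hgdef]; simp [mul_pow]
    rw [h1]
    rw [Complex.exp_eq_exp_ℂ]
    exact ((NormedSpace.expSeries_div_hasSum_exp (y*w)).tsum_eq)
  have htsumf : NFun lam eta w = Complex.exp (-I*w) * ∑' j, f j := by
    rw [NFun]
    congr 1
    refine tsum_congr fun j => ?_
    simp only [hfdef, cbeta]
    ring
  have hval : (∑' j, f j) * (∑' k, g k) = Complex.exp ((x:ℂ) * w) * NFun lam eta w := by
    rw [hexpg, htsumf]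
    have e : Complex.exp ((x:ℂ)*w) * Complex.exp (-I*w) = Complex.exp (y*w) := by
      rw [← Complex.exp_add]
      congr 1
      rw [hy]
      ring
    rw [← e]
    ring
  constructor
  · have H2 : HasSum (fun n => ∑ k ∈ Finset.range (n+1), f k * g (n-k))
        (Complex.exp ((x:ℂ)*w) * NFun lam eta w) := hval ▸ H
    exact (funext hterm : (fun n => ∑ k ∈ Finset.range (n+1), f k * g (n-k)) = _) ▸ H2
  · refine (summable_norm_sum_mul_range_of_summable_norm hfs hgs).congr fun n => ?_
    rw [hterm n]
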